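/- Let α ∈ (0,1], u > 0, F : [0,1]^n → [0,1] and x ∈ [0,1]^n be fixed. Then the map τ ↦ H̃(x,τ) is concave and differentiable on ℝ, its derivative equals ∂H̃/∂τ(x,τ) = 1 − (1/(α·u))·(measure of {ξ ∈ [0,u] : τ + ξ > F(x)}) and always lies in the interval [1 − 1/α, 1]; in particular |∂H̃/∂τ(x,τ)| ≤ max{1, 1/α − 1} for all τ. -/

import Mathlib

open MeasureTheory

/-- The unit cube `[0,1]^n` in `ℝⁿ` (with the Euclidean norm). -/
def cube (n : ℕ) : Set (EuclideanSpace ℝ (Fin n)) :=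
  {x | ∀ i, x i ∈ Set.Icc (0:ℝ) 1}

/-- The `u`-smoothed CVaR auxiliary function
`H̃(x,τ) = (1/u)·∫₀ᵘ (τ + ξ - (1/α)·max{τ + ξ - F(x), 0}) dξ`,
expressed as a function of the value `v = F(x)`. -/
noncomputable def smoothAuxH (α u : ℝ) (v τ : ℝ) : ℝ :=
  (1 / u) * ∫ ξ in (0:ℝ)..u, (τ + ξ - (1 / α) * max (τ + ξ - v) 0)

private lemma sq_max_hasDeriv (s : ℝ) :
    HasDerivAt (fun t : ℝ => max t 0 ^ 2 / 2) (max s 0) s := by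
  rcases lt_trichotomy s 0 with h | h | h
  · have h0 : HasDerivAt (fun _ : ℝ => (0:ℝ)) 0 s := hasDerivAt_const s 0
    have heq : (fun t : ℝ => max t 0 ^ 2 / 2) =ᶠ[nhds s] fun _ => (0:ℝ) := by
      filter_upwards [Iio_mem_nhds h] with t ht
      simp [max_eq_right (Set.mem_Iio.mp ht).le]
    simpa [max_eq_right h.le] using h0.congr_of_eventuallyEq heq
  · subst h
    rw [hasDerivAt_iff_isLittleO]
    have h1 : (fun t : ℝ => max t 0 / 2) =o[nhds (0:ℝ)] (fun _ => (1:ℝ)) := by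
      rw [Asymptotics.isLittleO_one_iff]
      have hc : Continuous fun t : ℝ => max t 0 / 2 :=
        (continuous_id.max continuous_const).div_const 2
      simpa using hc.tendsto 0
    have h2 := (Asymptotics.isBigO_refl (fun t : ℝ => t) (nhds 0)).mul_isLittleO h1
    have heq : ∀ t : ℝ, t * (max t 0 / 2) = max t 0 ^ 2 / 2 - max (0:ℝ) 0 ^ 2 / 2 - (t - 0) * max (0:ℝ) 0 := by
      intro t
      rcases le_total t 0 with ht | ht
      · simp [max_eq_right ht]
      · rw [max_eq_left ht]; simp; ring
    have := h2.congr heq (fun t => mul_one t)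
    simpa using this
  · have hd : HasDerivAt (fun t : ℝ => t ^ 2 / 2) s s := by
      have := (hasDerivAt_pow 2 s).div_const 2
      norm_num at this
      simpa using this
    have heq : (fun t : ℝ => max t 0 ^ 2 / 2) =ᶠ[nhds s] fun t => t ^ 2 / 2 := by
      filter_upwards [Ioi_mem_nhds h] with t ht
      rw [max_eq_left ht.le]
    simpa [max_eq_left h.le] using hd.congr_of_eventuallyEq heq

private lemma smoothAuxH_eq (α u v : ℝ) (hα : α ≠ 0) (hu : (0:ℝ) < u) (τ : ℝ) :
    smoothAuxH α u v τ
      = τ + u / 2 - (1 / (α * u)) * (max (τ - v + u) 0 ^ 2 / 2 - max (τ - v) 0 ^ 2 / 2) := by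
  have hInt : IntervalIntegrable (fun ξ => max (τ + ξ - v) 0) volume 0 u :=
    (((continuous_const.add continuous_id).sub continuous_const).max
      continuous_const).intervalIntegrable 0 u
  have hI1 : (∫ ξ in (0:ℝ)..u, max (τ + ξ - v) 0)
      = max (τ + u - v) 0 ^ 2 / 2 - max (τ + 0 - v) 0 ^ 2 / 2 := by
    apply intervalIntegral.integral_eq_sub_of_hasDerivAt
    · intro ξ _
      have h1 : HasDerivAt (fun ξ : ℝ => τ + ξ - v) 1 ξ := by
        simpa using ((hasDerivAt_id ξ).const_add τ).sub_const v
      simpa [Function.comp_def] using (sq_max_hasDeriv (τ + ξ - v)).comp ξ h1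
    · exact hInt
  have hid : IntervalIntegrable (fun ξ : ℝ => ξ) volume 0 u :=
    (continuous_id' (X := ℝ)).intervalIntegrable 0 u
  have hlin : (∫ ξ in (0:ℝ)..u, (τ + ξ)) = τ * u + u ^ 2 / 2 := by
    rw [intervalIntegral.integral_add intervalIntegrable_const hid,
      integral_id, intervalIntegral.integral_const]
    simp only [smul_eq_mul, sub_zero]
    ring
  have hsplit : (∫ ξ in (0:ℝ)..u, (τ + ξ - (1 / α) * max (τ + ξ - v) 0))
      = (∫ ξ in (0:ℝ)..u, (τ + ξ))
        - (1 / α) * ∫ ξ in (0:ℝ)..u, max (τ + ξ - v) 0 := by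
    rw [intervalIntegral.integral_sub
      (intervalIntegrable_const.add hid)
      (hInt.const_mul _), intervalIntegral.integral_const_mul]
  unfold smoothAuxH
  rw [hsplit, hlin, hI1,
    show τ + u - v = τ - v + u from by ring, show τ + 0 - v = τ - v from by ring]
  field_simp

private lemma hasDeriv_H (α u v : ℝ) (hα : (0:ℝ) < α) (hu : (0:ℝ) < u) (τ : ℝ) :
    HasDerivAt (fun τ => smoothAuxH α u v τ)
      (1 - (1 / (α * u)) * (max (τ - v + u) 0 - max (τ - v) 0)) τ := by
  have hfun : (fun τ => smoothAuxH α u v τ) = fun τ =>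
      τ + u / 2 - (1 / (α * u)) * (max (τ - v + u) 0 ^ 2 / 2 - max (τ - v) 0 ^ 2 / 2) :=
    funext fun τ => smoothAuxH_eq α u v hα.ne' hu τ
  rw [hfun]
  have h1 : HasDerivAt (fun τ : ℝ => max (τ - v + u) 0 ^ 2 / 2) (max (τ - v + u) 0) τ := by
    have haff : HasDerivAt (fun τ : ℝ => τ - v + u) 1 τ := by
      simpa using ((hasDerivAt_id τ).sub_const v).add_const u
    simpa [Function.comp_def] using (sq_max_hasDeriv (τ - v + u)).comp τ haff
  have h2 : HasDerivAt (fun τ : ℝ => max (τ - v) 0 ^ 2 / 2) (max (τ - v) 0) τ := by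
    have haff : HasDerivAt (fun τ : ℝ => τ - v) 1 τ := (hasDerivAt_id τ).sub_const v
    simpa [Function.comp_def] using (sq_max_hasDeriv (τ - v)).comp τ haff
  have := ((hasDerivAt_id τ).add_const (u / 2)).sub ((h1.sub h2).const_mul (1 / (α * u)))
  simpa [Pi.sub_def] using this

private lemma vol_eq (u v τ : ℝ) (hu : (0:ℝ) < u) :
    (volume {ξ ∈ Set.Icc (0:ℝ) u | v < τ + ξ}).toReal
      = max (τ - v + u) 0 - max (τ - v) 0 := by
  have hset : {ξ ∈ Set.Icc (0:ℝ) u | v < τ + ξ} = Set.Icc 0 u ∩ Set.Ioi (v - τ) := by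
    ext ξ
    simp only [Set.mem_setOf_eq, Set.mem_inter_iff, Set.mem_Ioi]
    constructor
    · rintro ⟨h1, h2⟩; exact ⟨h1, by linarith⟩
    · rintro ⟨h1, h2⟩; exact ⟨h1, by linarith⟩
  rw [hset]
  rcases lt_or_ge (v - τ) 0 with h | h
  · have h2 : Set.Icc (0:ℝ) u ∩ Set.Ioi (v - τ) = Set.Icc 0 u := by
      apply Set.inter_eq_left.mpr
      intro ξ hξ
      exact lt_of_lt_of_le h hξ.1
    rw [h2, Real.volume_Icc, ENNReal.toReal_ofReal (by linarith : (0:ℝ) ≤ u - 0),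
      max_eq_left (by linarith), max_eq_left (by linarith)]
    ring
  · have h2 : Set.Icc (0:ℝ) u ∩ Set.Ioi (v - τ) = Set.Ioc (v - τ) u := by
      ext ξ
      simp only [Set.mem_inter_iff, Set.mem_Icc, Set.mem_Ioi, Set.mem_Ioc]
      constructor
      · rintro ⟨⟨_, h1⟩, h2⟩; exact ⟨h2, h1⟩
      · rintro ⟨h1, h2⟩; exact ⟨⟨by linarith, h2⟩, h1⟩
    rw [h2, Real.volume_Ioc, ENNReal.toReal_ofReal',
      max_eq_right (by linarith : τ - v ≤ 0)]
    rw [show u - (v - τ) = τ - v + u from by ring]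
    ring

/-- For fixed `x`, the map `τ ↦ H̃(x,τ)` is concave and differentiable on `ℝ`, its
derivative equals `1 - (1/(α·u))·|{ξ ∈ [0,u] : τ + ξ > F(x)}|`, lies in `[1 - 1/α, 1]`,
and is bounded in absolute value by `max{1, 1/α - 1}`. -/
theorem stmt3 (n : ℕ) (α u : ℝ) (hα : α ∈ Set.Ioc (0:ℝ) 1) (hu : 0 < u)
    (F : EuclideanSpace ℝ (Fin n) → ℝ)
    (hrange : ∀ x ∈ cube n, F x ∈ Set.Icc (0:ℝ) 1)
    (x : EuclideanSpace ℝ (Fin n)) (hx : x ∈ cube n) :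
    ConcaveOn ℝ Set.univ (fun τ => smoothAuxH α u (F x) τ) ∧
    (∀ τ : ℝ, DifferentiableAt ℝ (fun τ => smoothAuxH α u (F x) τ) τ) ∧
    (∀ τ : ℝ, deriv (fun τ => smoothAuxH α u (F x) τ) τ
        = 1 - (1 / (α * u)) * (volume {ξ ∈ Set.Icc (0:ℝ) u | F x < τ + ξ}).toReal) ∧
    (∀ τ : ℝ, deriv (fun τ => smoothAuxH α u (F x) τ) τ ∈ Set.Icc (1 - 1 / α) 1) ∧
    (∀ τ : ℝ, |deriv (fun τ => smoothAuxH α u (F x) τ) τ| ≤ max 1 (1 / α - 1)) := by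
  obtain ⟨hα0, hα1⟩ := hα
  set v := F x with hv
  have hD : ∀ τ : ℝ, HasDerivAt (fun τ => smoothAuxH α u v τ)
      (1 - (1 / (α * u)) * (max (τ - v + u) 0 - max (τ - v) 0)) τ :=
    fun τ => hasDeriv_H α u v hα0 hu τ
  have hderiv : ∀ τ : ℝ, deriv (fun τ => smoothAuxH α u v τ) τ
      = 1 - (1 / (α * u)) * (max (τ - v + u) 0 - max (τ - v) 0) :=
    fun τ => (hD τ).deriv
  have hαu : (0:ℝ) < α * u := mul_pos hα0 hu
  have hc : (0:ℝ) ≤ 1 / (α * u) := by positivity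
  have hMl : ∀ τ : ℝ, (0:ℝ) ≤ max (τ - v + u) 0 - max (τ - v) 0 := by
    intro τ
    have : max (τ - v) 0 ≤ max (τ - v + u) 0 := max_le_max (by linarith) le_rfl
    linarith
  have hMu : ∀ τ : ℝ, max (τ - v + u) 0 - max (τ - v) 0 ≤ u := by
    intro τ
    have : max (τ - v + u) 0 ≤ max (τ - v) 0 + u :=
      max_le (by have := le_max_left (τ - v) 0; linarith)
        (by have := le_max_right (τ - v) 0; linarith)
    linarith
  have hIcc : ∀ τ : ℝ, deriv (fun τ => smoothAuxH α u v τ) τ ∈ Set.Icc (1 - 1 / α) 1 := by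
    intro τ
    rw [hderiv τ]
    constructor
    · have h1 : (1 / (α * u)) * (max (τ - v + u) 0 - max (τ - v) 0) ≤ (1 / (α * u)) * u :=
        mul_le_mul_of_nonneg_left (hMu τ) hc
      have h2 : (1 / (α * u)) * u = 1 / α := by field_simp
      linarith
    · have h1 : (0:ℝ) ≤ (1 / (α * u)) * (max (τ - v + u) 0 - max (τ - v) 0) :=
        mul_nonneg hc (hMl τ)
      linarith
  refine ⟨?_, fun τ => (hD τ).differentiableAt, ?_, hIcc, ?_⟩
  · apply AntitoneOn.concaveOn_of_deriv convex_univ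
    · exact (Differentiable.continuous fun τ => (hD τ).differentiableAt).continuousOn
    · exact fun τ _ => (hD τ).differentiableAt.differentiableWithinAt
    · intro a _ b _ hab
      rw [hderiv a, hderiv b]
      have hmono : max (a - v + u) 0 - max (a - v) 0 ≤ max (b - v + u) 0 - max (b - v) 0 := by
        simp only [max_def]
        split_ifs <;> linarith
      have := mul_le_mul_of_nonneg_left hmono hc
      linarith
  · intro τ
    rw [hderiv τ, vol_eq u v τ hu]
  · intro τ
    have h := hIcc τ
    rw [abs_le]
    constructor
    · have h1 : 1 - 1 / α ≤ deriv (fun τ => smoothAuxH α u v τ) τ := h.1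
      have h2 : -(max 1 (1 / α - 1)) ≤ 1 - 1 / α := by
        have := le_max_right (1:ℝ) (1 / α - 1); linarith
      linarith
    · exact h.2.trans (le_max_left _ _)
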